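/- Let E be a real normed vector space and let f, g : E → ℝ be convex continuous functions admitting a common continuous affine minorant (there exist φ₀ ∈ E* and c ∈ ℝ with φ₀(u) − c ≤ f(u) and φ₀(u) − c ≤ g(u) for all u ∈ E). Then ∫₀¹ dt / ( t(1−t)(π² + (log(t/(1−t)))²) ) = 1, and for every x ∈ E, L(f,g)(x) = ∫₀¹ (f !_t g)(x) / ( t(1−t)(π² + (log(t/(1−t)))²) ) dt; that is, the logarithmic mean is the integral of the weighted harmonic means against the probability density Ψ(t) = 1/( t(1−t)(π² + (log(t/(1−t)))²) ) on (0,1). -/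

import Mathlib

open Real

/-- The `t`-weighted functional harmonic mean of `f,g : E → ℝ`, evaluated at `x`. -/
noncomputable def funHarm {E : Type*} [NormedAddCommGroup E] [NormedSpace ℝ E]
    (f g : E → ℝ) (t : ℝ) (x : E) : ℝ :=
  sSup { r : ℝ | ∃ φ : E →L[ℝ] ℝ, ∃ c₁ c₂ : ℝ,
    (∀ u : E, φ u - f u ≤ c₁) ∧ (∀ u : E, φ u - g u ≤ c₂) ∧
    r = φ x - (1 - t) * c₁ - t * c₂ }

/-- The `λ`-weighted functional geometric mean of `f,g : E → ℝ`, evaluated at `x`. -/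
noncomputable def funGeom {E : Type*} [NormedAddCommGroup E] [NormedSpace ℝ E]
    (f g : E → ℝ) (l : ℝ) (x : E) : ℝ :=
  (Real.sin (π * l) / π) *
    ∫ t in (0 : ℝ)..1, t ^ (l - 1) * (1 - t) ^ (-l) * funHarm f g t x

/-- The logarithmic mean `L(f,g)(x) = ∫₀¹ (f ♯_t g)(x) dt`. -/
noncomputable def funLog {E : Type*} [NormedAddCommGroup E] [NormedSpace ℝ E]
    (f g : E → ℝ) (x : E) : ℝ :=
  ∫ t in (0 : ℝ)..1, funGeom f g t x

open MeasureTheory Set Filter Topology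

lemma expsin_deriv (b : ℝ) (l : ℝ) :
    HasDerivAt (fun l => exp (b*l) * (b * sin (π*l) - π * cos (π*l)) / (b^2+π^2))
      (exp (b*l) * sin (π*l)) l := by
  have hπ : (0:ℝ) < b^2+π^2 := by positivity
  have h1 : HasDerivAt (fun l => exp (b*l)) (b * exp (b*l)) l := by
    simpa [mul_comm] using ((hasDerivAt_id l).const_mul b).exp
  have h2 : HasDerivAt (fun l => sin (π*l)) (π * cos (π*l)) l := by
    simpa [mul_comm] using ((hasDerivAt_id l).const_mul π).sin
  have h3 : HasDerivAt (fun l => cos (π*l)) (-(π * sin (π*l))) l := by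
    simpa [mul_comm] using ((hasDerivAt_id l).const_mul π).cos
  have h4 : HasDerivAt (fun l => b * sin (π*l) - π * cos (π*l))
      (b * (π * cos (π*l)) - π * (-(π * sin (π*l)))) l := ((h2.const_mul b).sub (h3.const_mul π))
  have h5 := h1.mul h4
  have h6 := h5.div_const (b^2+π^2)
  refine h6.congr_deriv ?_
  symm
  field_simp
  ring

lemma expsin_integral (b : ℝ) :
    ∫ l in (0:ℝ)..1, exp (b*l) * sin (π*l) = π * (exp b + 1) / (b^2+π^2) := by
  have hπ : (b^2+π^2) ≠ 0 := by positivity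
  have := intervalIntegral.integral_eq_sub_of_hasDerivAt
    (f := fun l => exp (b*l) * (b * sin (π*l) - π * cos (π*l)) / (b^2+π^2))
    (f' := fun l => exp (b*l) * sin (π*l)) (a := 0) (b := 1)
    (fun l _ => expsin_deriv b l)
    (Continuous.intervalIntegrable (by continuity) 0 1)
  rw [this]
  simp [Real.sin_pi, Real.cos_pi]
  field_simp
  ring

noncomputable def Dfn (t : ℝ) : ℝ := t * (1 - t) * (π ^ 2 + Real.log (t / (1 - t)) ^ 2)

lemma Dfn_pos {t : ℝ} (ht : t ∈ Ioo (0:ℝ) 1) : 0 < Dfn t := by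
  obtain ⟨h0, h1⟩ := ht
  have : 0 < 1 - t := by linarith
  have hπ : 0 < π ^ 2 := by positivity
  unfold Dfn; positivity

lemma psi_contOn : ContinuousOn (fun t => 1 / Dfn t) (Ioo (0:ℝ) 1) := by
  refine ContinuousOn.div continuousOn_const ?_ (fun t ht => (Dfn_pos ht).ne')
  unfold Dfn
  refine (continuousOn_id.mul (continuousOn_const.sub continuousOn_id)).mul
    (continuousOn_const.add (ContinuousOn.pow ?_ 2))
  refine ContinuousOn.log (ContinuousOn.div continuousOn_id
    (continuousOn_const.sub continuousOn_id) (fun t ht => by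
      have : (0:ℝ) < 1 - t := by linarith [ht.2]
      exact this.ne')) ?_
  intro t ht
  have h0 : (0:ℝ) < t := ht.1
  have h1 : (0:ℝ) < 1 - t := by linarith [ht.2]
  have : (0:ℝ) < t / (1 - t) := div_pos h0 h1
  simpa using this.ne'

lemma psi_deriv {t : ℝ} (ht : t ∈ Ioo (0:ℝ) 1) :
    HasDerivAt (fun t => π⁻¹ * arctan ((Real.log t - Real.log (1-t)) / π)) (1 / Dfn t) t := by
  obtain ⟨h0, h1⟩ := ht
  have h1' : 0 < 1 - t := by linarith
  have hπ : π ≠ 0 := Real.pi_ne_zero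
  have hL : HasDerivAt (fun t : ℝ => Real.log t - Real.log (1-t)) (1/t - (-1)/(1-t)) t := by
    have ha : HasDerivAt (fun t : ℝ => Real.log t) (1/t) t := by
      simpa [one_div] using Real.hasDerivAt_log h0.ne'
    have hb : HasDerivAt (fun t : ℝ => Real.log (1-t)) ((-1)/(1-t)) t := by
      have hs : HasDerivAt (fun t : ℝ => 1 - t) (-1) t := by
        simpa using (hasDerivAt_id t).const_sub 1
      simpa [div_eq_mul_inv, mul_comm, Function.comp_def] using (Real.hasDerivAt_log h1'.ne').comp t hs
    exact ha.sub hb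
  have hu : HasDerivAt (fun t : ℝ => (Real.log t - Real.log (1-t)) / π)
      ((1/t - (-1)/(1-t)) / π) t := hL.div_const π
  have hA := (Real.hasDerivAt_arctan (((Real.log t - Real.log (1-t)) / π))).comp t hu
  have h := (HasDerivAt.const_mul (π⁻¹) hA)
  refine h.congr_deriv ?_
  symm
  unfold Dfn
  rw [Real.log_div h0.ne' h1'.ne']
  set L := Real.log t - Real.log (1-t)
  field_simp
  ring

noncomputable def Ffn (t : ℝ) : ℝ := π⁻¹ * arctan ((Real.log t - Real.log (1-t)) / π)

lemma Ffn_abs (t : ℝ) : |Ffn t| ≤ 1/2 := by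
  unfold Ffn
  rw [abs_mul, abs_of_nonneg (by positivity : (0:ℝ) ≤ π⁻¹)]
  have h := Real.arctan_mem_Ioo ((Real.log t - Real.log (1-t)) / π)
  have : |arctan ((Real.log t - Real.log (1-t)) / π)| ≤ π/2 := by
    rw [abs_le]; constructor <;> [linarith [h.1]; linarith [h.2]]
  calc π⁻¹ * |arctan _| ≤ π⁻¹ * (π/2) := by
        exact mul_le_mul_of_nonneg_left this (by positivity)
    _ = 1/2 := by field_simp

lemma psi_main : IntegrableOn (fun t => 1 / Dfn t) (Ioo (0:ℝ) 1) ∧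
    ∫ t in Ioo (0:ℝ) 1, 1 / Dfn t = 1 := by
  set a : ℕ → ℝ := fun n => ((n:ℝ)+2)⁻¹ with ha_def
  set b : ℕ → ℝ := fun n => 1 - ((n:ℝ)+2)⁻¹ with hb_def
  have hn2 : ∀ n : ℕ, (2:ℝ) ≤ (n:ℝ)+2 := fun n => by
    have : (0:ℝ) ≤ (n:ℝ) := Nat.cast_nonneg n
    linarith
  have ha0 : ∀ n, 0 < a n := fun n => by
    have : (0:ℝ) < (n:ℝ)+2 := by positivity
    simp only [ha_def]
    exact inv_pos.mpr this
  have hahalf : ∀ n, a n ≤ 1/2 := fun n => by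
    simp only [ha_def]
    rw [show (1:ℝ)/2 = (2:ℝ)⁻¹ by norm_num]
    exact inv_anti₀ (by norm_num) (hn2 n)
  have hab : ∀ n, a n ≤ b n := fun n => by
    have := hahalf n; simp only [hb_def]; simp only [ha_def] at this ⊢; linarith
  have hb1 : ∀ n, b n < 1 := fun n => by
    have := ha0 n; simp only [hb_def]; simp only [ha_def] at this; linarith
  have hsub : ∀ n, Icc (a n) (b n) ⊆ Ioo (0:ℝ) 1 := fun n t ht =>
    ⟨lt_of_lt_of_le (ha0 n) ht.1, lt_of_le_of_lt ht.2 (hb1 n)⟩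
  have hatop : Tendsto (fun n : ℕ => (n:ℝ)+2) atTop atTop :=
    tendsto_atTop_add_const_right _ 2 tendsto_natCast_atTop_atTop
  have ha : Tendsto a atTop (𝓝 0) := hatop.inv_tendsto_atTop
  have hb : Tendsto b atTop (𝓝 1) := by
    have := tendsto_const_nhds (x := (1:ℝ)) (f := atTop (α := ℕ)) |>.sub ha
    simpa using this
  -- FTC on each interval
  have key : ∀ n, ∫ t in a n..b n, 1 / Dfn t = Ffn (b n) - Ffn (a n) := by
    intro n
    have huIcc : uIcc (a n) (b n) = Icc (a n) (b n) := uIcc_of_le (hab n)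
    refine intervalIntegral.integral_eq_sub_of_hasDerivAt (fun t ht => ?_) ?_
    · exact psi_deriv (hsub n (huIcc ▸ ht))
    · exact (psi_contOn.mono (huIcc ▸ hsub n)).intervalIntegrable
  have hIoc_sub : ∀ n, Ioc (a n) (b n) ⊆ Ioo (0:ℝ) 1 := fun n =>
    (Ioc_subset_Icc_self).trans (hsub n)
  -- integrability on each Ioc w.r.t. restricted measure
  have hfi : ∀ n, IntegrableOn (fun t => 1 / Dfn t) (Ioc (a n) (b n))
      (volume.restrict (Ioo (0:ℝ) 1)) := by
    intro n
    rw [IntegrableOn, Measure.restrict_restrict measurableSet_Ioc,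
      inter_eq_self_of_subset_left (hIoc_sub n)]
    exact ((psi_contOn.mono (hsub n)).integrableOn_compact isCompact_Icc).mono_set
      Ioc_subset_Icc_self
  have hint_eq : ∀ n, ∫ t in Ioc (a n) (b n), (1 / Dfn t) ∂(volume.restrict (Ioo (0:ℝ) 1))
      = Ffn (b n) - Ffn (a n) := by
    intro n
    rw [Measure.restrict_restrict measurableSet_Ioc,
      inter_eq_self_of_subset_left (hIoc_sub n), ← intervalIntegral.integral_of_le (hab n)]
    exact key n
  -- limit of F(b n) - F(a n)
  have hFb : Tendsto (fun n => Ffn (b n)) atTop (𝓝 (1/2)) := by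
    have h1b : ∀ n, 1 - b n = a n := fun n => by simp [hb_def, ha_def]
    have hlogb : Tendsto (fun n => Real.log (b n)) atTop (𝓝 0) := by
      have := (Real.continuousAt_log one_ne_zero).tendsto.comp hb
      simpa [Function.comp_def] using this
    have hloga : Tendsto (fun n => Real.log (a n)) atTop atBot := by
      refine Real.tendsto_log_nhdsGT_zero.comp ?_
      rw [tendsto_nhdsWithin_iff]
      exact ⟨ha, Eventually.of_forall (fun n => ha0 n)⟩
    have hL : Tendsto (fun n => (Real.log (b n) - Real.log (1 - b n)) / π) atTop atTop := by
      refine Tendsto.atTop_div_const Real.pi_pos ?_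
      simp only [h1b]
      have hev : ∀ᶠ n : ℕ in atTop, (-1:ℝ) ≤ Real.log (b n) :=
        hlogb.eventually (eventually_ge_nhds (by norm_num : (-1:ℝ) < 0))
      have hneg : Tendsto (fun n => -Real.log (a n)) atTop atTop :=
        tendsto_neg_atBot_atTop.comp hloga
      have hsum := tendsto_atTop_add_left_of_le' atTop (-1) hev hneg
      exact hsum.congr (fun n => by ring)
    have := (Real.tendsto_arctan_atTop.mono_right nhdsWithin_le_nhds).comp hL
    have h2 := this.const_mul (π⁻¹)
    simp only [Function.comp] at h2
    have : π⁻¹ * (π/2) = 1/2 := by field_simp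
    rw [this] at h2
    exact h2
  have hFa : Tendsto (fun n => Ffn (a n)) atTop (𝓝 (-(1/2))) := by
    have hloga : Tendsto (fun n => Real.log (a n)) atTop atBot := by
      refine Real.tendsto_log_nhdsGT_zero.comp ?_
      rw [tendsto_nhdsWithin_iff]
      exact ⟨ha, Eventually.of_forall (fun n => ha0 n)⟩
    have hlog1a : Tendsto (fun n => Real.log (1 - a n)) atTop (𝓝 0) := by
      have h1a : Tendsto (fun n => 1 - a n) atTop (𝓝 1) := by
        have := tendsto_const_nhds (x := (1:ℝ)) (f := atTop (α := ℕ)) |>.sub ha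
        simpa using this
      have := (Real.continuousAt_log one_ne_zero).tendsto.comp h1a
      simpa [Function.comp_def] using this
    have hL : Tendsto (fun n => (Real.log (a n) - Real.log (1 - a n)) / π) atTop atBot := by
      refine Tendsto.atBot_div_const Real.pi_pos ?_
      have hev : ∀ᶠ n : ℕ in atTop, -Real.log (1 - a n) ≤ 1 := by
        filter_upwards [hlog1a.eventually (eventually_ge_nhds (by norm_num : (-1:ℝ) < 0))] with n h
        linarith
      have hsum := tendsto_atBot_add_right_of_ge' atTop 1 hloga hev
      exact hsum.congr (fun n => by ring)
    have := (Real.tendsto_arctan_atBot.mono_right nhdsWithin_le_nhds).comp hL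
    have h2 := this.const_mul (π⁻¹)
    simp only [Function.comp] at h2
    have : π⁻¹ * (-(π/2)) = -(1/2) := by field_simp
    rw [this] at h2
    exact h2
  have hFtends : Tendsto (fun n => Ffn (b n) - Ffn (a n)) atTop (𝓝 1) := by
    have := hFb.sub hFa
    norm_num at this
    exact this
  have htendsto : Tendsto (fun n => ∫ t in Ioc (a n) (b n), (1 / Dfn t)
      ∂(volume.restrict (Ioo (0:ℝ) 1))) atTop (𝓝 1) := by
    simp only [hint_eq]; exact hFtends
  have hφ : AECover ((volume : Measure ℝ).restrict (Ioo (0:ℝ) 1)) atTop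
      (fun n => Ioc (a n) (b n)) := aecover_Ioo_of_Ioc ha hb
  have hnng : 0 ≤ᵐ[(volume : Measure ℝ).restrict (Ioo (0:ℝ) 1)] (fun t => 1 / Dfn t) := by
    refine (ae_restrict_iff' measurableSet_Ioo).2 (Eventually.of_forall (fun t ht => ?_))
    exact (one_div_pos.mpr (Dfn_pos ht)).le
  have hInt : Integrable (fun t => 1 / Dfn t) ((volume : Measure ℝ).restrict (Ioo (0:ℝ) 1)) :=
    hφ.integrable_of_integral_tendsto_of_nonneg_ae 1 hfi hnng htendsto
  have hval : ∫ t, 1 / Dfn t ∂((volume : Measure ℝ).restrict (Ioo (0:ℝ) 1)) = 1 :=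
    hφ.integral_eq_of_tendsto 1 hInt htendsto
  exact ⟨hInt, hval⟩

section Harm
variable {E : Type*} [NormedAddCommGroup E] [NormedSpace ℝ E]
  (f g : E → ℝ) (x : E)

def harmSet (t : ℝ) : Set ℝ :=
  { r : ℝ | ∃ φ : E →L[ℝ] ℝ, ∃ c₁ c₂ : ℝ,
    (∀ u : E, φ u - f u ≤ c₁) ∧ (∀ u : E, φ u - g u ≤ c₂) ∧
    r = φ x - (1 - t) * c₁ - t * c₂ }

lemma funHarm_eq (t : ℝ) : funHarm f g t x = sSup (harmSet f g x t) := rfl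

variable {f g x}

lemma harmSet_nonempty (hmin : ∃ φ₀ : E →L[ℝ] ℝ, ∃ c : ℝ, ∀ u : E, φ₀ u - c ≤ f u ∧ φ₀ u - c ≤ g u)
    (t : ℝ) : (harmSet f g x t).Nonempty := by
  obtain ⟨φ₀, c, hc⟩ := hmin
  exact ⟨φ₀ x - (1 - t) * c - t * c, φ₀, c, c, fun u => by linarith [(hc u).1],
    fun u => by linarith [(hc u).2], rfl⟩

lemma harmSet_bddAbove {t : ℝ} (ht : t ∈ Icc (0:ℝ) 1) :
    BddAbove (harmSet f g x t) := by
  refine ⟨(1 - t) * f x + t * g x, fun r hr => ?_⟩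
  obtain ⟨φ, c₁, c₂, h1, h2, rfl⟩ := hr
  have hf1 : φ x - c₁ ≤ f x := by linarith [h1 x]
  have hg1 : φ x - c₂ ≤ g x := by linarith [h2 x]
  have ht0 : 0 ≤ 1 - t := by linarith [ht.2]
  have ht1 : 0 ≤ t := ht.1
  nlinarith [mul_le_mul_of_nonneg_left hf1 ht0, mul_le_mul_of_nonneg_left hg1 ht1]

lemma funHarm_le {t : ℝ} (ht : t ∈ Icc (0:ℝ) 1)
    (hmin : ∃ φ₀ : E →L[ℝ] ℝ, ∃ c : ℝ, ∀ u : E, φ₀ u - c ≤ f u ∧ φ₀ u - c ≤ g u) :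
    funHarm f g t x ≤ (1 - t) * f x + t * g x := by
  rw [funHarm_eq]
  refine csSup_le (harmSet_nonempty hmin t) (fun r hr => ?_)
  obtain ⟨φ, c₁, c₂, h1, h2, rfl⟩ := hr
  have hf1 : φ x - c₁ ≤ f x := by linarith [h1 x]
  have hg1 : φ x - c₂ ≤ g x := by linarith [h2 x]
  have ht0 : 0 ≤ 1 - t := by linarith [ht.2]
  have ht1 : 0 ≤ t := ht.1
  nlinarith [mul_le_mul_of_nonneg_left hf1 ht0, mul_le_mul_of_nonneg_left hg1 ht1]

lemma le_funHarm {t : ℝ} (ht : t ∈ Icc (0:ℝ) 1)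
    {φ₀ : E →L[ℝ] ℝ} {c : ℝ} (hc : ∀ u : E, φ₀ u - c ≤ f u ∧ φ₀ u - c ≤ g u) :
    φ₀ x - c ≤ funHarm f g t x := by
  rw [funHarm_eq]
  have hmem : φ₀ x - (1 - t) * c - t * c ∈ harmSet f g x t :=
    ⟨φ₀, c, c, fun u => by linarith [(hc u).1], fun u => by linarith [(hc u).2], rfl⟩
  have := le_csSup (harmSet_bddAbove ht) hmem
  calc φ₀ x - c = φ₀ x - (1 - t) * c - t * c := by ring
    _ ≤ _ := this

lemma funHarm_convexOn
    (hmin : ∃ φ₀ : E →L[ℝ] ℝ, ∃ c : ℝ, ∀ u : E, φ₀ u - c ≤ f u ∧ φ₀ u - c ≤ g u) :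
    ConvexOn ℝ (Icc (0:ℝ) 1) (fun t => funHarm f g t x) := by
  refine ⟨convex_Icc 0 1, fun t₁ h₁ t₂ h₂ p q hp hq hpq => ?_⟩
  simp only [smul_eq_mul, funHarm_eq]
  refine csSup_le (harmSet_nonempty hmin _) (fun r hr => ?_)
  obtain ⟨φ, c₁, c₂, hc1, hc2, rfl⟩ := hr
  have m1 : φ x - (1 - t₁) * c₁ - t₁ * c₂ ≤ sSup (harmSet f g x t₁) :=
    le_csSup (harmSet_bddAbove h₁) ⟨φ, c₁, c₂, hc1, hc2, rfl⟩
  have m2 : φ x - (1 - t₂) * c₁ - t₂ * c₂ ≤ sSup (harmSet f g x t₂) :=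
    le_csSup (harmSet_bddAbove h₂) ⟨φ, c₁, c₂, hc1, hc2, rfl⟩
  have e : φ x - (1 - (p * t₁ + q * t₂)) * c₁ - (p * t₁ + q * t₂) * c₂
      = p * (φ x - (1 - t₁) * c₁ - t₁ * c₂) + q * (φ x - (1 - t₂) * c₁ - t₂ * c₂) := by
    linear_combination (c₁ - φ x) * hpq
  rw [e]
  exact add_le_add (mul_le_mul_of_nonneg_left m1 hp) (mul_le_mul_of_nonneg_left m2 hq)

lemma funHarm_continuousOn
    (hmin : ∃ φ₀ : E →L[ℝ] ℝ, ∃ c : ℝ, ∀ u : E, φ₀ u - c ≤ f u ∧ φ₀ u - c ≤ g u) :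
    ContinuousOn (fun t => funHarm f g t x) (Ioo (0:ℝ) 1) := by
  have := (funHarm_convexOn (x := x) hmin).continuousOn_interior
  rwa [interior_Icc] at this

lemma funHarm_abs_le {t : ℝ} (ht : t ∈ Icc (0:ℝ) 1)
    {φ₀ : E →L[ℝ] ℝ} {c : ℝ} (hc : ∀ u : E, φ₀ u - c ≤ f u ∧ φ₀ u - c ≤ g u) :
    |funHarm f g t x| ≤ |φ₀ x - c| + |f x| + |g x| := by
  have h1 := le_funHarm (x := x) ht hc
  have h2 := funHarm_le (x := x) ht ⟨φ₀, c, hc⟩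
  have ht0 : 0 ≤ 1 - t := by linarith [ht.2]
  have ht1 : 0 ≤ t := ht.1
  have hub : (1 - t) * f x + t * g x ≤ |f x| + |g x| := by
    have := abs_nonneg (f x); have := abs_nonneg (g x)
    nlinarith [le_abs_self (f x), le_abs_self (g x), mul_le_mul_of_nonneg_left
      (le_abs_self (f x)) ht0, mul_le_mul_of_nonneg_left (le_abs_self (g x)) ht1]
  rw [abs_le]
  refine ⟨?_, ?_⟩
  · have h3 := neg_abs_le (φ₀ x - c)
    have h4 := abs_nonneg (f x)
    have h5 := abs_nonneg (g x)
    linarith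
  · have h6 := abs_nonneg (φ₀ x - c)
    linarith

end Harm

lemma kernel_pointwise {t : ℝ} (h0 : 0 < t) (h1 : t < 1) (l : ℝ) :
    Real.sin (π*l) * (t ^ (l-1) * (1-t) ^ (-l))
      = t⁻¹ * (exp ((Real.log t - Real.log (1-t))*l) * sin (π*l)) := by
  have h1' : 0 < 1 - t := by linarith
  rw [Real.rpow_def_of_pos h0, Real.rpow_def_of_pos h1']
  rw [← Real.exp_add]
  have : Real.log t * (l - 1) + Real.log (1-t) * (-l)
      = (Real.log t - Real.log (1-t))*l + (- Real.log t) := by ring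
  rw [this, Real.exp_add, Real.exp_neg, Real.exp_log h0]
  ring

lemma kernel_integral {t : ℝ} (ht : t ∈ Ioo (0:ℝ) 1) :
    ∫ l in (0:ℝ)..1, Real.sin (π*l) * (t ^ (l-1) * (1-t) ^ (-l)) = π / Dfn t := by
  obtain ⟨h0, h1⟩ := ht
  have h1' : 0 < 1 - t := by linarith
  set L := Real.log t - Real.log (1-t) with hL
  have hcong : (fun l => Real.sin (π*l) * (t ^ (l-1) * (1-t) ^ (-l)))
      = fun l => t⁻¹ * (exp (L*l) * sin (π*l)) := funext (kernel_pointwise h0 h1)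
  rw [hcong, intervalIntegral.integral_const_mul, expsin_integral L]
  have hlogdiv : Real.log (t / (1-t)) = L := Real.log_div h0.ne' h1'.ne'
  have hexpL : Real.exp L = t / (1-t) := by
    rw [hL, Real.exp_sub, Real.exp_log h0, Real.exp_log h1']
  rw [hexpL]
  unfold Dfn
  rw [hlogdiv]
  have hD : (0:ℝ) < π^2 + L^2 := by positivity
  field_simp
  ring

noncomputable def Kfn {E : Type*} [NormedAddCommGroup E] [NormedSpace ℝ E]
    (f g : E → ℝ) (x : E) : ℝ × ℝ → ℝ :=
  fun p => Real.sin (π * p.1) / π * (p.2 ^ (p.1 - 1) * (1 - p.2) ^ (-p.1) * funHarm f g p.2 x)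

noncomputable def muI : Measure ℝ := volume.restrict (Ioc (0:ℝ) 1)

instance : SFinite muI := by unfold muI; infer_instance


section Main
variable {E : Type*} [NormedAddCommGroup E] [NormedSpace ℝ E]
  {f g : E → ℝ} {x : E}

lemma ae_Ioo : ∀ᵐ t ∂muI, t ∈ Ioo (0:ℝ) 1 := by
  have h1 : ∀ᵐ t ∂muI, t ∈ Ioc (0:ℝ) 1 := ae_restrict_mem measurableSet_Ioc
  have h2 : ∀ᵐ t : ℝ ∂(volume : Measure ℝ), t ≠ 1 := by
    rw [ae_iff]
    simp only [ne_eq, not_not, setOf_eq_eq_singleton]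
    exact Real.volume_singleton
  have h2' : ∀ᵐ t ∂muI, t ≠ 1 := ae_restrict_of_ae h2
  filter_upwards [h1, h2'] with t ht h1t
  exact ⟨ht.1, lt_of_le_of_ne ht.2 h1t⟩

lemma hGeom (l : ℝ) : funGeom f g l x = ∫ t, Kfn f g x (l, t) ∂muI := by
  unfold funGeom
  rw [intervalIntegral.integral_of_le zero_le_one]
  show _ = ∫ t in Ioc (0:ℝ) 1,
    Real.sin (π * l) / π * (t ^ (l - 1) * (1 - t) ^ (-l) * funHarm f g t x)
  rw [MeasureTheory.integral_const_mul]

lemma inner_eq {t : ℝ} (ht : t ∈ Ioo (0:ℝ) 1) :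
    ∫ l, Kfn f g x (l, t) ∂muI = funHarm f g t x / Dfn t := by
  have hπ : (π:ℝ) ≠ 0 := Real.pi_ne_zero
  have hD : (0:ℝ) < Dfn t := Dfn_pos ht
  have hfun : (fun l => Kfn f g x (l, t))
      = fun l => (funHarm f g t x / π) * (Real.sin (π * l) * (t ^ (l-1) * (1-t) ^ (-l))) := by
    funext l; unfold Kfn; ring
  rw [hfun]
  show ∫ l in Ioc (0:ℝ) 1, _ = _
  rw [← intervalIntegral.integral_of_le zero_le_one, intervalIntegral.integral_const_mul,
    kernel_integral ht]
  field_simp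

lemma norm_inner_eq {t : ℝ} (ht : t ∈ Ioo (0:ℝ) 1) :
    ∫ l, ‖Kfn f g x (l, t)‖ ∂muI = |funHarm f g t x| / Dfn t := by
  have hπ : (0:ℝ) < π := Real.pi_pos
  have hD : (0:ℝ) < Dfn t := Dfn_pos ht
  have h1t : (0:ℝ) < 1 - t := by linarith [ht.2]
  have hfun : ∀ l ∈ Ioc (0:ℝ) 1, ‖Kfn f g x (l, t)‖
      = (|funHarm f g t x| / π) * (Real.sin (π * l) * (t ^ (l-1) * (1-t) ^ (-l))) := by
    intro l hl
    have hsin : 0 ≤ Real.sin (π * l) := by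
      apply Real.sin_nonneg_of_nonneg_of_le_pi
      · exact mul_nonneg hπ.le hl.1.le
      · nlinarith [hl.2, hπ]
    have hP1 : (0:ℝ) < t ^ (l-1) := Real.rpow_pos_of_pos ht.1 _
    have hP2 : (0:ℝ) < (1-t) ^ (-l) := Real.rpow_pos_of_pos h1t _
    have : Kfn f g x (l, t)
        = (funHarm f g t x / π) * (Real.sin (π * l) * (t ^ (l-1) * (1-t) ^ (-l))) := by
      unfold Kfn; ring
    rw [Real.norm_eq_abs, this, abs_mul, abs_div, abs_of_pos hπ,
      abs_of_nonneg (by positivity : (0:ℝ) ≤ Real.sin (π * l) * (t ^ (l-1) * (1-t) ^ (-l)))]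
  show ∫ l in Ioc (0:ℝ) 1, _ = _
  rw [MeasureTheory.setIntegral_congr_fun measurableSet_Ioc hfun,
    ← intervalIntegral.integral_of_le zero_le_one, intervalIntegral.integral_const_mul,
    kernel_integral ht]
  field_simp

lemma slice_integrable {t : ℝ} (ht : t ∈ Ioo (0:ℝ) 1) :
    Integrable (fun l => Kfn f g x (l, t)) muI := by
  have h1t : (0:ℝ) < 1 - t := by linarith [ht.2]
  have h1 : Continuous (fun l : ℝ => t ^ (l - 1)) :=
    Continuous.rpow continuous_const (continuous_id.sub continuous_const)
      (fun l => Or.inl ht.1.ne')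
  have h2 : Continuous (fun l : ℝ => (1 - t) ^ (-l)) :=
    Continuous.rpow continuous_const continuous_id.neg (fun l => Or.inl h1t.ne')
  have hcont : Continuous (fun l => Kfn f g x (l, t)) := by
    show Continuous fun l : ℝ =>
      Real.sin (π * l) / π * (t ^ (l - 1) * (1 - t) ^ (-l) * funHarm f g t x)
    exact ((Real.continuous_sin.comp (continuous_const.mul continuous_id)).div_const π).mul
      ((h1.mul h2).mul continuous_const)
  exact hcont.integrableOn_Ioc

lemma Kfn_aesm (hmin : ∃ φ₀ : E →L[ℝ] ℝ, ∃ c : ℝ, ∀ u : E, φ₀ u - c ≤ f u ∧ φ₀ u - c ≤ g u) :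
    AEStronglyMeasurable (Kfn f g x) (muI.prod muI) := by
  have hprod : muI.prod muI
      = ((volume : Measure ℝ).prod volume).restrict ((Ioc (0:ℝ) 1) ×ˢ (Ioc (0:ℝ) 1)) :=
    Measure.prod_restrict _ _
  have haeset : ((Ioc (0:ℝ) 1) ×ˢ (Ioc (0:ℝ) 1) : Set (ℝ × ℝ))
      =ᵐ[(volume : Measure ℝ).prod volume] ((Ioo (0:ℝ) 1) ×ˢ (Ioo (0:ℝ) 1)) := by
    rw [MeasureTheory.ae_eq_set]
    constructor
    · have hsub : ((Ioc (0:ℝ) 1) ×ˢ (Ioc (0:ℝ) 1) : Set (ℝ × ℝ)) \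
          ((Ioo (0:ℝ) 1) ×ˢ (Ioo (0:ℝ) 1))
          ⊆ (({(1:ℝ)} : Set ℝ) ×ˢ (univ : Set ℝ)) ∪ ((univ : Set ℝ) ×ˢ ({(1:ℝ)} : Set ℝ)) := by
        rintro p ⟨⟨hp1, hp2⟩, hnp⟩
        simp only [mem_prod, mem_Ioo, mem_Ioc] at hp1 hp2 hnp
        by_cases h1 : p.1 < 1
        · right
          refine ⟨mem_univ _, ?_⟩
          have : ¬ p.2 < 1 := fun h => hnp ⟨⟨hp1.1, h1⟩, hp2.1, h⟩
          simp only [mem_singleton_iff]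
          linarith [hp2.2, not_lt.mp this]
        · left
          refine ⟨?_, mem_univ _⟩
          simp only [mem_singleton_iff]
          linarith [hp1.2, not_lt.mp h1]
      refine measure_mono_null hsub (measure_union_null ?_ ?_) <;>
        rw [Measure.prod_prod] <;> simp [Real.volume_singleton]
    · have hempty : ((Ioo (0:ℝ) 1) ×ˢ (Ioo (0:ℝ) 1) : Set (ℝ × ℝ)) \
          ((Ioc (0:ℝ) 1) ×ˢ (Ioc (0:ℝ) 1)) = ∅ := by
        rw [diff_eq_empty]
        exact prod_mono Ioo_subset_Ioc_self Ioo_subset_Ioc_self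
      simp [hempty]
  rw [hprod, Measure.restrict_congr_set haeset]
  refine ContinuousOn.aestronglyMeasurable ?_ (measurableSet_Ioo.prod measurableSet_Ioo)
  have hH : ContinuousOn (fun p : ℝ × ℝ => funHarm f g p.2 x)
      ((Ioo (0:ℝ) 1) ×ˢ (Ioo (0:ℝ) 1)) :=
    (funHarm_continuousOn hmin).comp continuous_snd.continuousOn (fun p hp => hp.2)
  have h1 : ContinuousOn (fun p : ℝ × ℝ => p.2 ^ (p.1 - 1))
      ((Ioo (0:ℝ) 1) ×ˢ (Ioo (0:ℝ) 1)) := by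
    intro p hp
    exact (ContinuousAt.rpow continuous_snd.continuousAt
      ((continuous_fst.sub continuous_const).continuousAt) (Or.inl hp.2.1.ne')).continuousWithinAt
  have h2 : ContinuousOn (fun p : ℝ × ℝ => (1 - p.2) ^ (-p.1))
      ((Ioo (0:ℝ) 1) ×ˢ (Ioo (0:ℝ) 1)) := by
    intro p hp
    have : (1:ℝ) - p.2 ≠ 0 := sub_ne_zero_of_ne hp.2.2.ne'
    exact (ContinuousAt.rpow (continuous_const.sub continuous_snd).continuousAt
      (continuous_fst.neg.continuousAt) (Or.inl this)).continuousWithinAt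
  unfold Kfn
  exact (((Real.continuous_sin.comp (continuous_const.mul continuous_fst)).div_const
    π).continuousOn).mul ((h1.mul h2).mul hH)

lemma psi_integrable_muI : Integrable (fun t => 1 / Dfn t) muI := by
  have h := psi_main.1
  have : muI = volume.restrict (Ioo (0:ℝ) 1) :=
    (Measure.restrict_congr_set Ioo_ae_eq_Ioc).symm
  rw [this]
  exact h

lemma Kfn_integrable {φ₀ : E →L[ℝ] ℝ} {c : ℝ}
    (hc : ∀ u : E, φ₀ u - c ≤ f u ∧ φ₀ u - c ≤ g u) :
    Integrable (Kfn f g x) (muI.prod muI) := by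
  have hmin : ∃ φ₀ : E →L[ℝ] ℝ, ∃ c : ℝ, ∀ u : E, φ₀ u - c ≤ f u ∧ φ₀ u - c ≤ g u := ⟨φ₀, c, hc⟩
  have hmeas := Kfn_aesm (f := f) (g := g) (x := x) hmin
  rw [MeasureTheory.integrable_prod_iff' hmeas]
  constructor
  · filter_upwards [ae_Ioo] with t ht
    exact slice_integrable ht
  · set C : ℝ := |φ₀ x - c| + |f x| + |g x| with hC
    refine Integrable.mono' (g := fun t => C * (1 / Dfn t))
      (psi_integrable_muI.const_mul C) ?_ ?_
    · exact (hmeas.norm.prod_swap).integral_prod_right'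
    · filter_upwards [ae_Ioo] with t ht
      have hD : (0:ℝ) < Dfn t := Dfn_pos ht
      rw [norm_inner_eq ht, Real.norm_eq_abs,
        abs_of_nonneg (by positivity : (0:ℝ) ≤ |funHarm f g t x| / Dfn t)]
      have hHb : |funHarm f g t x| ≤ C := funHarm_abs_le (mem_Icc_of_Ioo ht) hc
      rw [mul_one_div]
      gcongr

end Main

/-- The density `Ψ(t) = 1/(t(1−t)(π² + (log(t/(1−t)))²))` is a probability
density on `(0,1)`, and the logarithmic mean of convex functionals is the integral of the
weighted harmonic means against it. -/
theorem funLog_eq_integral_funHarm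
    {E : Type*} [NormedAddCommGroup E] [NormedSpace ℝ E]
    (f g : E → ℝ)
    (hf : ConvexOn ℝ Set.univ f) (hfc : Continuous f)
    (hg : ConvexOn ℝ Set.univ g) (hgc : Continuous g)
    (hmin : ∃ φ₀ : E →L[ℝ] ℝ, ∃ c : ℝ, ∀ u : E, φ₀ u - c ≤ f u ∧ φ₀ u - c ≤ g u) :
    (∫ t in (0 : ℝ)..1, 1 / (t * (1 - t) * (π ^ 2 + Real.log (t / (1 - t)) ^ 2))) = 1 ∧
      ∀ x : E, funLog f g x =
        ∫ t in (0 : ℝ)..1,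
          funHarm f g t x / (t * (1 - t) * (π ^ 2 + Real.log (t / (1 - t)) ^ 2)) := by
  obtain ⟨φ₀, c, hc⟩ := hmin
  constructor
  · rw [intervalIntegral.integral_of_le zero_le_one]
    have h1 : ∫ t in Ioc (0:ℝ) 1, 1 / Dfn t = 1 := by
      rw [MeasureTheory.integral_Ioc_eq_integral_Ioo]
      exact psi_main.2
    simp only [Dfn] at h1
    exact h1
  · intro x
    have key : funLog f g x = ∫ t, funHarm f g t x / Dfn t ∂muI := by
      unfold funLog
      rw [intervalIntegral.integral_of_le zero_le_one]
      calc (∫ l in Ioc (0:ℝ) 1, funGeom f g l x)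
          = ∫ l, (∫ t, Kfn f g x (l, t) ∂muI) ∂muI :=
            MeasureTheory.integral_congr_ae (Eventually.of_forall (fun l => hGeom l))
        _ = ∫ t, (∫ l, Kfn f g x (l, t) ∂muI) ∂muI :=
            MeasureTheory.integral_integral_swap (Kfn_integrable hc)
        _ = ∫ t, funHarm f g t x / Dfn t ∂muI := by
            refine MeasureTheory.integral_congr_ae ?_
            filter_upwards [ae_Ioo] with t ht
            exact inner_eq ht
    rw [key, intervalIntegral.integral_of_le zero_le_one]
    show ∫ t, funHarm f g t x / Dfn t ∂muI
      = ∫ t in Ioc (0:ℝ) 1, funHarm f g t x / (t * (1 - t) * (π ^ 2 + Real.log (t / (1 - t)) ^ 2))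
    simp only [Dfn]
    rfl
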